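/- Let T ⊂ ℝ³ be a bounded open set with positive Lebesgue measure. Suppose w(x) = 2(a·x)x − |x|²a + ρx + Qx + b with a, b ∈ ℝ³, ρ ∈ ℝ, Q ∈ 𝔰𝔬(3), and suppose ∫_T w dx = 0, ∫_T div(w) dx = 0, ∫_T curl(w) dx = 0, and ∫_T curl(curl(w)) dx = 0. Then a = 0, ρ = 0, Q = 0, b = 0, and hence w = 0. -/

import Mathlib

open MeasureTheory Real Filter Matrix

noncomputable def pd (i : Fin 3) (f : (Fin 3 → ℝ) → ℝ) (x : Fin 3 → ℝ) : ℝ :=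
  fderiv ℝ f x (Pi.single i 1)

def dot3 (a x : Fin 3 → ℝ) : ℝ := ∑ i, a i * x i

noncomputable def divg (w : (Fin 3 → ℝ) → Fin 3 → ℝ) (x : Fin 3 → ℝ) : ℝ :=
  ∑ i, pd i (fun y => w y i) x

noncomputable def curl3 (w : (Fin 3 → ℝ) → Fin 3 → ℝ) (x : Fin 3 → ℝ) : Fin 3 → ℝ :=
  ![pd 1 (fun y => w y 2) x - pd 2 (fun y => w y 1) x,
    pd 2 (fun y => w y 0) x - pd 0 (fun y => w y 2) x,
    pd 0 (fun y => w y 1) x - pd 1 (fun y => w y 0) x]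

noncomputable def tfsym (u : (Fin 3 → ℝ) → Fin 3 → ℝ) (x : Fin 3 → ℝ) (i j : Fin 3) : ℝ :=
  (pd i (fun y => u y j) x + pd j (fun y => u y i) x) / 2
    - (1 / 3) * divg u x * (if i = j then 1 else 0)

/-- The conformal Killing field `x ↦ 2(a·x)x − |x|²a + ρx + Qx + b`. -/
def ckField (a b : Fin 3 → ℝ) (ρ : ℝ) (Q : Matrix (Fin 3) (Fin 3) ℝ) :
    (Fin 3 → ℝ) → Fin 3 → ℝ :=
  fun x j => 2 * dot3 a x * x j - dot3 x x * a j + ρ * x j + Q.mulVec x j + b j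

lemma coord_hasFDerivAt (k : Fin 3) (x : Fin 3 → ℝ) :
    HasFDerivAt (fun y : Fin 3 → ℝ => y k)
      (ContinuousLinearMap.proj k : (Fin 3 → ℝ) →L[ℝ] ℝ) x :=
  hasFDerivAt_apply k x

lemma dot3_hasFDerivAt (a x : Fin 3 → ℝ) :
    HasFDerivAt (fun y => dot3 a y)
      (∑ k, a k • (ContinuousLinearMap.proj k : (Fin 3 → ℝ) →L[ℝ] ℝ)) x := by
  unfold dot3
  exact HasFDerivAt.fun_sum fun k _ => (coord_hasFDerivAt k x).const_mul (a k)

lemma sq_hasFDerivAt (x : Fin 3 → ℝ) :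
    HasFDerivAt (fun y => dot3 y y)
      (∑ k, (2 * x k) • (ContinuousLinearMap.proj k : (Fin 3 → ℝ) →L[ℝ] ℝ)) x := by
  unfold dot3
  have : ∀ k : Fin 3, HasFDerivAt (fun y : Fin 3 → ℝ => y k * y k)
      ((2 * x k) • (ContinuousLinearMap.proj k : (Fin 3 → ℝ) →L[ℝ] ℝ)) x := by
    intro k
    have := (coord_hasFDerivAt k x).fun_mul (coord_hasFDerivAt k x)
    refine this.congr_fderiv ?_
    ext v
    simp [two_mul, mul_comm]
    ring
  exact HasFDerivAt.fun_sum fun k _ => this k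

lemma mulVec_hasFDerivAt (Q : Matrix (Fin 3) (Fin 3) ℝ) (j : Fin 3) (x : Fin 3 → ℝ) :
    HasFDerivAt (fun y : Fin 3 → ℝ => Q.mulVec y j)
      (∑ k, Q j k • (ContinuousLinearMap.proj k : (Fin 3 → ℝ) →L[ℝ] ℝ)) x := by
  have : (fun y : Fin 3 → ℝ => Q.mulVec y j) = fun y => dot3 (Q j) y := by
    funext y; simp [Matrix.mulVec, dot3, dotProduct]
  rw [this]
  exact dot3_hasFDerivAt (Q j) x

lemma pd_ck (a b : Fin 3 → ℝ) (ρ : ℝ) (Q : Matrix (Fin 3) (Fin 3) ℝ)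
    (i j : Fin 3) (x : Fin 3 → ℝ) :
    pd i (fun y => ckField a b ρ Q y j) x
      = 2 * a i * x j + 2 * dot3 a x * (if i = j then 1 else 0)
        - 2 * x i * a j + ρ * (if i = j then 1 else 0) + Q j i := by
  have h := (((((((dot3_hasFDerivAt a x).const_mul 2).fun_mul (hasFDerivAt_apply j x)).fun_sub
      ((sq_hasFDerivAt x).mul_const (a j))).fun_add
      ((hasFDerivAt_apply j x).const_mul ρ)).fun_add (mulVec_hasFDerivAt Q j x)).add_const (b j))
  rw [pd]
  simp only [ckField]
  rw [h.fderiv]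
  simp [ContinuousLinearMap.proj, Pi.single_apply, Finset.mul_sum, eq_comm]
  ring

lemma pd_comb (c1 c2 d : ℝ) (k1 k2 : Fin 3) (i : Fin 3) (x : Fin 3 → ℝ) :
    pd i (fun y : Fin 3 → ℝ => 4 * (c1 * y k1 - c2 * y k2) + d) x
      = 4 * (c1 * (if i = k1 then 1 else 0) - c2 * (if i = k2 then 1 else 0)) := by
  have h := ((((coord_hasFDerivAt k1 x).const_mul c1).fun_sub
      ((coord_hasFDerivAt k2 x).const_mul c2)).const_mul 4).add_const d
  rw [pd, h.fderiv]
  simp [ContinuousLinearMap.proj, Pi.single_apply, eq_comm]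

lemma divg_ck (a b : Fin 3 → ℝ) (ρ : ℝ) (Q : Matrix (Fin 3) (Fin 3) ℝ) (x : Fin 3 → ℝ) :
    divg (ckField a b ρ Q) x = 6 * dot3 a x + 3 * ρ + (Q 0 0 + Q 1 1 + Q 2 2) := by
  simp only [divg, Fin.sum_univ_three, pd_ck]
  simp [dot3, Fin.sum_univ_three]
  ring

lemma curl_ck (a b : Fin 3 → ℝ) (ρ : ℝ) (Q : Matrix (Fin 3) (Fin 3) ℝ) (x : Fin 3 → ℝ)
    (i : Fin 3) :
    curl3 (ckField a b ρ Q) x i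
      = ![4 * (a 1 * x 2 - a 2 * x 1) + (Q 2 1 - Q 1 2),
          4 * (a 2 * x 0 - a 0 * x 2) + (Q 0 2 - Q 2 0),
          4 * (a 0 * x 1 - a 1 * x 0) + (Q 1 0 - Q 0 1)] i := by
  fin_cases i <;>
    · simp only [curl3, pd_ck, Matrix.cons_val_zero, Matrix.cons_val_one, Matrix.head_cons,
        Matrix.cons_val_two, Matrix.tail_cons, Fin.isValue]
      norm_num [Fin.ext_iff]
      try simp only [Fin.reduceFinMk]
      ring

lemma curlcurl_ck (a b : Fin 3 → ℝ) (ρ : ℝ) (Q : Matrix (Fin 3) (Fin 3) ℝ) (x : Fin 3 → ℝ)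
    (i : Fin 3) :
    curl3 (curl3 (ckField a b ρ Q)) x i = 8 * a i := by
  have E : curl3 (ckField a b ρ Q)
      = fun y => ![4 * (a 1 * y 2 - a 2 * y 1) + (Q 2 1 - Q 1 2),
          4 * (a 2 * y 0 - a 0 * y 2) + (Q 0 2 - Q 2 0),
          4 * (a 0 * y 1 - a 1 * y 0) + (Q 1 0 - Q 0 1)] :=
    funext fun y => funext fun j => curl_ck a b ρ Q y j
  rw [E]
  fin_cases i <;>
    · simp only [curl3, Matrix.cons_val_zero, Matrix.cons_val_one, Matrix.head_cons,
        Matrix.cons_val_two, Matrix.tail_cons, Fin.isValue, pd_comb]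
      norm_num [Fin.ext_iff]
      try simp only [Fin.reduceFinMk]
      ring

theorem stmt4 (T : Set (Fin 3 → ℝ)) (hTo : IsOpen T)
    (hTb : Bornology.IsBounded T) (hTpos : 0 < volume T)
    (a b : Fin 3 → ℝ) (ρ : ℝ) (Q : Matrix (Fin 3) (Fin 3) ℝ) (hQ : Qᵀ = -Q)
    (h1 : ∀ i, (∫ x in T, ckField a b ρ Q x i) = 0)
    (h2 : (∫ x in T, divg (ckField a b ρ Q) x) = 0)
    (h3 : ∀ i, (∫ x in T, curl3 (ckField a b ρ Q) x i) = 0)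
    (h4 : ∀ i, (∫ x in T, curl3 (curl3 (ckField a b ρ Q)) x i) = 0) :
    a = 0 ∧ ρ = 0 ∧ Q = 0 ∧ b = 0 ∧ ∀ x, ckField a b ρ Q x = 0 := by
  have hvol : (volume T).toReal ≠ 0 :=
    ne_of_gt (ENNReal.toReal_pos hTpos.ne' hTb.measure_lt_top.ne)
  have hskew : ∀ i j, Q i j = -Q j i := by
    intro i j
    have := congrFun (congrFun hQ j) i
    simpa [Matrix.transpose_apply] using this
  have ha : a = 0 := by
    funext i
    have h := h4 i
    simp only [curlcurl_ck, setIntegral_const, smul_eq_mul] at h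
    have h8 : (8 : ℝ) * a i = 0 := (mul_eq_zero.mp h).resolve_left hvol
    have : a i = 0 := by linarith
    simpa using this
  subst ha
  have hQ0 : Q = 0 := by
    have key : ∀ i : Fin 3, (volume T).toReal *
        (![Q 2 1 - Q 1 2, Q 0 2 - Q 2 0, Q 1 0 - Q 0 1] i) = 0 := by
      intro i
      have h := h3 i
      have e : ∀ x : Fin 3 → ℝ, curl3 (ckField 0 b ρ Q) x i
          = ![Q 2 1 - Q 1 2, Q 0 2 - Q 2 0, Q 1 0 - Q 0 1] i := by
        intro x
        have := curl_ck 0 b ρ Q x i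
        fin_cases i <;> simpa using this
      simp only [e, setIntegral_const, smul_eq_mul] at h
      exact h
    have k0 := key 0; have k1 := key 1; have k2 := key 2
    simp only [Matrix.cons_val_zero, Matrix.cons_val_one, Matrix.head_cons,
      Matrix.cons_val_two, Matrix.tail_cons] at k0 k1 k2
    have d0 : Q 2 1 - Q 1 2 = 0 := (mul_eq_zero.mp k0).resolve_left hvol
    have d1 : Q 0 2 - Q 2 0 = 0 := (mul_eq_zero.mp k1).resolve_left hvol
    have d2 : Q 1 0 - Q 0 1 = 0 := (mul_eq_zero.mp k2).resolve_left hvol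
    have hd : ∀ i, Q i i = 0 := fun i => by have := hskew i i; linarith
    have e12 : Q 1 2 = 0 := by have := hskew 1 2; linarith
    have e21 : Q 2 1 = 0 := by have := hskew 2 1; linarith
    have e02 : Q 0 2 = 0 := by have := hskew 0 2; linarith
    have e20 : Q 2 0 = 0 := by have := hskew 2 0; linarith
    have e01 : Q 0 1 = 0 := by have := hskew 0 1; linarith
    have e10 : Q 1 0 = 0 := by have := hskew 1 0; linarith
    ext i j
    fin_cases i <;> fin_cases j <;>
      simp only [Matrix.zero_apply] <;>
      first
        | exact hd _
        | exact e01 | exact e02 | exact e10 | exact e12 | exact e20 | exact e21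
  subst hQ0
  have hρ : ρ = 0 := by
    have e : ∀ x : Fin 3 → ℝ, divg (ckField 0 b ρ 0) x = 3 * ρ := by
      intro x
      rw [divg_ck]
      simp [dot3]
    simp only [e, setIntegral_const, smul_eq_mul] at h2
    have := (mul_eq_zero.mp h2).resolve_left hvol
    linarith
  subst hρ
  have hb : b = 0 := by
    funext i
    have h := h1 i
    have e : ∀ x : Fin 3 → ℝ, ckField 0 b 0 0 x i = b i := by
      intro x
      simp [ckField, dot3, Matrix.mulVec, dotProduct]
    simp only [e, setIntegral_const, smul_eq_mul] at h
    have := (mul_eq_zero.mp h).resolve_left hvol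
    simpa using this
  subst hb
  refine ⟨rfl, rfl, rfl, rfl, fun x => ?_⟩
  funext j
  simp [ckField, dot3, Matrix.mulVec, dotProduct]
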